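/- Let S ⊂ ℝ^N be a simplex with vertex e_v, let 0 < μ ≤ 1, and let ℓ be affine on the corner S_v^μ = conv({e_v} ∪ {(1−μ)e_v + μe_w : w ≠ v}). Then for any matrix A ∈ ℝ^{M×N} and y ∈ ℝ^M, the minimizer over z ∈ S of the one-sided directional derivative ∂_{z−e_v}[ℓ(x) + ½‖Ax−y‖²] at x = e_v, minus e_v, equals e_w − e_v, where e_w minimizes over vertices e_u of S the quantity ℓ((1−μ)e_v + μe_u) + μ(Ae_v − y)ᵀAe_u. -/
import Mathlib


/-- Lemma (simplex derivative): the conditional-gradient direction at the vertex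
`e v` for the objective `ℓ(x) + ½‖Ax−y‖²`, with `ℓ` affine on the corner
`S_v^μ`, is `e w − e v` where `e w` minimizes
`ℓ((1−μ)e_v + μe_u) + μ(Ae_v − y)ᵀAe_u` over vertices `e u`. -/
theorem stmt_2 {N M : ℕ} {V : Type*} [Fintype V] [DecidableEq V]
    (e : V → (Fin N → ℝ)) (hind : AffineIndependent ℝ e)
    (μ : ℝ) (hμ0 : 0 < μ) (hμ1 : μ ≤ 1) (v : V)
    (ℓ : (Fin N → ℝ) → ℝ)
    -- `ℓ` is affine on the corner `S_v^μ = conv({e v} ∪ {(1−μ)e_v + μe_w : w ≠ v})`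
    (haff : ∀ x ∈ convexHull ℝ (({e v} : Set (Fin N → ℝ)) ∪
        {p | ∃ w, w ≠ v ∧ p = (1 - μ) • e v + μ • e w}),
      ∀ y ∈ convexHull ℝ (({e v} : Set (Fin N → ℝ)) ∪
        {p | ∃ w, w ≠ v ∧ p = (1 - μ) • e v + μ • e w}),
      ∀ l ∈ Set.Icc (0:ℝ) 1,
      ℓ ((1 - l) • x + l • y) = (1 - l) * ℓ x + l * ℓ y)
    (A : Matrix (Fin M) (Fin N) ℝ) (y : Fin M → ℝ)
    -- the full objective `f(x) = ℓ(x) + ½‖Ax − y‖²`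
    (f : (Fin N → ℝ) → ℝ)
    (hf : f = fun x => ℓ x + (1/2) * ∑ i, (A.mulVec x i - y i)^2)
    -- `g z` is the one-sided directional derivative of `f` at `e v` in direction `z − e v`
    (g : (Fin N → ℝ) → ℝ)
    (hg : ∀ z ∈ convexHull ℝ (Set.range e),
      Filter.Tendsto (fun h : ℝ => (f (e v + h • (z - e v)) - f (e v)) / h)
        (nhdsWithin 0 (Set.Ioi 0)) (nhds (g z)))
    -- `e w` is the unique minimizer over vertices of `ℓ((1−μ)e_v+μe_u) + μ(Ae_v−y)ᵀAe_u`
    (w : V)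
    (hw : ∀ u : V, u ≠ w →
      ℓ ((1 - μ) • e v + μ • e w) + μ * ∑ i, (A.mulVec (e v) i - y i) * A.mulVec (e w) i <
      ℓ ((1 - μ) • e v + μ • e u) + μ * ∑ i, (A.mulVec (e v) i - y i) * A.mulVec (e u) i) :
    (∀ z ∈ convexHull ℝ (Set.range e), g (e w) ≤ g z) ∧
    (∀ z ∈ convexHull ℝ (Set.range e), g z = g (e w) → z = e w) := by
  classical
  subst hf
  set C := convexHull ℝ (({e v} : Set (Fin N → ℝ)) ∪
      {p | ∃ w, w ≠ v ∧ p = (1 - μ) • e v + μ • e w}) with hC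
  have hμne : μ ≠ 0 := ne_of_gt hμ0
  -- corner points
  have hcorner : ∀ u : V, (1 - μ) • e v + μ • e u ∈ C := by
    intro u
    by_cases h : u = v
    · have : (1 - μ) • e v + μ • e u = e v := by rw [h]; module
      rw [this]
      exact subset_convexHull ℝ _ (Or.inl rfl)
    · exact subset_convexHull ℝ _ (Or.inr ⟨u, h, rfl⟩)
  have hev : e v ∈ C := subset_convexHull ℝ _ (Or.inl rfl)
  -- ℓ is convex and concave on C
  have hconv : ConvexOn ℝ C ℓ := by
    refine ⟨convex_convexHull ℝ _, ?_⟩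
    intro x hx y' hy' a b ha hb hab
    have hab' : a = 1 - b := by linarith
    subst hab'
    exact le_of_eq (haff x hx y' hy' b ⟨hb, by linarith⟩)
  have hconc : ConcaveOn ℝ C ℓ := by
    refine ⟨convex_convexHull ℝ _, ?_⟩
    intro x hx y' hy' a b ha hb hab
    have hab' : a = 1 - b := by linarith
    subst hab'
    exact ge_of_eq (haff x hx y' hy' b ⟨hb, by linarith⟩)
  set r : Fin M → ℝ := fun i => A.mulVec (e v) i - y i with hr
  set G : (Fin N → ℝ) → ℝ := fun z =>
    (ℓ ((1 - μ) • e v + μ • z) - ℓ (e v)) / μ +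
      ∑ i, r i * (A.mulVec z i - A.mulVec (e v) i) with hG
  -- representation of points in the hull
  have hrep : ∀ z ∈ convexHull ℝ (Set.range e), ∃ (s : Finset V) (c : V → ℝ),
      (∀ u ∈ s, 0 ≤ c u) ∧ (∑ u ∈ s, c u = 1) ∧ z = ∑ u ∈ s, c u • e u := by
    intro z hz
    rw [convexHull_range_eq_exists_affineCombination] at hz
    obtain ⟨s, c, hc0, hc1, hcz⟩ := hz
    exact ⟨s, c, hc0, hc1, by
      rw [← hcz, Finset.affineCombination_eq_linear_combination s e c hc1]⟩
  -- the combination identity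
  have hpt : ∀ (s : Finset V) (c : V → ℝ), (∑ u ∈ s, c u = 1) →
      (1 - μ) • e v + μ • (∑ u ∈ s, c u • e u)
        = ∑ u ∈ s, c u • ((1 - μ) • e v + μ • e u) := by
    intro s c hc1
    have h1 : ∑ u ∈ s, c u • ((1 - μ) • e v + μ • e u)
        = (∑ u ∈ s, c u) • ((1 - μ) • e v) + ∑ u ∈ s, c u • (μ • e u) := by
      rw [Finset.sum_smul, ← Finset.sum_add_distrib]
      exact Finset.sum_congr rfl fun u _ => by rw [smul_add]
    rw [h1, hc1, one_smul, Finset.smul_sum]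
    congr 1
    exact Finset.sum_congr rfl fun u _ => (smul_comm _ _ _)
  -- membership of the shifted point
  have hTz : ∀ z ∈ convexHull ℝ (Set.range e), (1 - μ) • e v + μ • z ∈ C := by
    intro z hz
    obtain ⟨s, c, hc0, hc1, rfl⟩ := hrep z hz
    rw [hpt s c hc1]
    exact (convex_convexHull ℝ _).sum_mem hc0 hc1 (fun u _ => hcorner u)
  -- the limit computation : g z = G z on the hull
  have hkey : ∀ z ∈ convexHull ℝ (Set.range e), g z = G z := by
    intro z hz
    have hTz' := hTz z hz
    set Q : ℝ := ∑ i, (A.mulVec z i - A.mulVec (e v) i)^2 with hQ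
    have hq : ∀ h ∈ Set.Ioc (0:ℝ) μ,
        ((fun x => ℓ x + (1/2) * ∑ i, (A.mulVec x i - y i)^2) (e v + h • (z - e v)) -
          (fun x => ℓ x + (1/2) * ∑ i, (A.mulVec x i - y i)^2) (e v)) / h
          = G z + (h / 2) * Q := by
      intro h hh
      obtain ⟨hh0, hhμ⟩ := hh
      have hne : h ≠ 0 := ne_of_gt hh0
      -- ℓ part
      have hl : ℓ (e v + h • (z - e v))
          = (1 - h/μ) * ℓ (e v) + (h/μ) * ℓ ((1 - μ) • e v + μ • z) := by
        have hmem : h/μ ∈ Set.Icc (0:ℝ) 1 :=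
          ⟨div_nonneg hh0.le hμ0.le, (div_le_one hμ0).mpr hhμ⟩
        have heq : (1 - h/μ) • e v + (h/μ) • ((1 - μ) • e v + μ • z)
            = e v + h • (z - e v) := by
          match_scalars <;> (field_simp; try ring)
        rw [← heq, haff (e v) hev _ hTz' (h/μ) hmem]
      -- quadratic part
      have hA : ∀ i, A.mulVec (e v + h • (z - e v)) i
          = A.mulVec (e v) i + h * (A.mulVec z i - A.mulVec (e v) i) := by
        intro i
        rw [Matrix.mulVec_add, Matrix.mulVec_smul, Matrix.mulVec_sub]
        simp [mul_sub]
      have hsum : ∑ i, (A.mulVec (e v + h • (z - e v)) i - y i)^2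
          = ∑ i, (A.mulVec (e v) i - y i)^2
            + h * (2 * ∑ i, r i * (A.mulVec z i - A.mulVec (e v) i) + h * Q) := by
        have : ∀ i, (A.mulVec (e v + h • (z - e v)) i - y i)^2
            = (A.mulVec (e v) i - y i)^2
              + (2*h) * (r i * (A.mulVec z i - A.mulVec (e v) i))
              + h^2 * (A.mulVec z i - A.mulVec (e v) i)^2 := by
          intro i; rw [hA i]; simp only [hr]; ring
        rw [Finset.sum_congr rfl fun i _ => this i, Finset.sum_add_distrib,
          Finset.sum_add_distrib, ← Finset.mul_sum, ← Finset.mul_sum, hQ]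
        ring
      simp only [hl, hsum, hG]
      field_simp
      ring
    have hlim : Filter.Tendsto (fun h : ℝ => G z + (h / 2) * Q)
        (nhdsWithin 0 (Set.Ioi 0)) (nhds (G z)) := by
      have hcont : Continuous (fun h : ℝ => G z + (h / 2) * Q) := by fun_prop
      have h6 := hcont.tendsto 0
      simp only [zero_div, zero_mul, add_zero] at h6
      exact h6.mono_left nhdsWithin_le_nhds
    refine tendsto_nhds_unique (hg z hz) (hlim.congr' ?_)
    filter_upwards [Ioc_mem_nhdsGT hμ0] with h hh
    exact (hq h hh).symm
  -- G is affine over convex combinations of vertices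
  have hGaff : ∀ (s : Finset V) (c : V → ℝ), (∀ u ∈ s, 0 ≤ c u) → (∑ u ∈ s, c u = 1) →
      G (∑ u ∈ s, c u • e u) = ∑ u ∈ s, c u * G (e u) := by
    intro s c hc0 hc1
    have hJ : ℓ ((1 - μ) • e v + μ • (∑ u ∈ s, c u • e u))
        = ∑ u ∈ s, c u * ℓ ((1 - μ) • e v + μ • e u) := by
      rw [hpt s c hc1]
      refine le_antisymm ?_ ?_
      · exact hconv.map_sum_le hc0 hc1 (fun u _ => hcorner u)
      · exact hconc.le_map_sum hc0 hc1 (fun u _ => hcorner u)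
    have hAz : ∀ i, A.mulVec (∑ u ∈ s, c u • e u) i = ∑ u ∈ s, c u * A.mulVec (e u) i := by
      intro i
      have : A.mulVec (∑ u ∈ s, c u • e u) = ∑ u ∈ s, c u • A.mulVec (e u) := by
        rw [show A.mulVec (∑ u ∈ s, c u • e u) = A.mulVecLin (∑ u ∈ s, c u • e u) from rfl,
          map_sum]
        exact Finset.sum_congr rfl fun u _ => by simp
      rw [this, Finset.sum_apply]
      rfl
    simp only [hG, hJ, hAz]
    have e1 : (∑ u ∈ s, c u * ℓ ((1 - μ) • e v + μ • e u) - ℓ (e v)) / μ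
        = ∑ u ∈ s, c u * ((ℓ ((1 - μ) • e v + μ • e u) - ℓ (e v)) / μ) := by
      have h4 : ∑ u ∈ s, c u * ((ℓ ((1 - μ) • e v + μ • e u) - ℓ (e v)) / μ)
          = (∑ u ∈ s, (c u * ℓ ((1 - μ) • e v + μ • e u) - c u * ℓ (e v))) / μ := by
        rw [Finset.sum_div]
        exact Finset.sum_congr rfl fun u _ => by ring
      have h7 : (∑ u ∈ s, c u) * ℓ (e v) = ∑ u ∈ s, c u * ℓ (e v) := Finset.sum_mul _ _ _
      rw [h4, Finset.sum_sub_distrib, ← h7, hc1, one_mul]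
    have e2 : ∑ i, r i * ((∑ u ∈ s, c u * A.mulVec (e u) i) - A.mulVec (e v) i)
        = ∑ u ∈ s, c u * ∑ i, r i * (A.mulVec (e u) i - A.mulVec (e v) i) := by
      have step : ∀ i : Fin M, r i * ((∑ u ∈ s, c u * A.mulVec (e u) i) - A.mulVec (e v) i)
          = ∑ u ∈ s, c u * (r i * (A.mulVec (e u) i - A.mulVec (e v) i)) := by
        intro i
        have h2 : ∑ u ∈ s, c u * (r i * (A.mulVec (e u) i - A.mulVec (e v) i))
            = (∑ u ∈ s, c u * A.mulVec (e u) i) * r i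
              - (∑ u ∈ s, c u) * (r i * A.mulVec (e v) i) := by
          have hA1 : (∑ u ∈ s, c u * A.mulVec (e u) i) * r i
              = ∑ u ∈ s, (c u * A.mulVec (e u) i) * r i := Finset.sum_mul _ _ _
          have hA2 : (∑ u ∈ s, c u) * (r i * A.mulVec (e v) i)
              = ∑ u ∈ s, c u * (r i * A.mulVec (e v) i) := Finset.sum_mul _ _ _
          rw [hA1, hA2, ← Finset.sum_sub_distrib]
          exact Finset.sum_congr rfl fun u _ => by ring
        rw [h2, hc1]; ring
      rw [Finset.sum_congr rfl fun i _ => step i, Finset.sum_comm]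
      exact Finset.sum_congr rfl fun u _ => (Finset.mul_sum _ _ _).symm
    rw [e1, e2, ← Finset.sum_add_distrib]
    exact Finset.sum_congr rfl fun u _ => (mul_add _ _ _).symm
  -- comparison of G at vertices
  have hsplit : ∀ u : V, ∑ i, r i * (A.mulVec (e u) i - A.mulVec (e v) i)
      = (∑ i, r i * A.mulVec (e u) i) - ∑ i, r i * A.mulVec (e v) i := by
    intro u; rw [← Finset.sum_sub_distrib]; exact Finset.sum_congr rfl fun i _ => by ring
  have hGw : ∀ u : V, u ≠ w → G (e w) < G (e u) := by
    intro u hu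
    have h1 := hw u hu
    simp only [hG, hsplit]
    have e3 : ∀ x s : ℝ, (x - ℓ (e v)) / μ + (s - ∑ i, r i * A.mulVec (e v) i)
        = (x + μ * s) / μ - ℓ (e v) / μ - ∑ i, r i * A.mulVec (e v) i := by
      intro x s; field_simp; ring
    rw [e3, e3]
    have h2 : (ℓ ((1 - μ) • e v + μ • e w) + μ * ∑ i, r i * A.mulVec (e w) i) / μ
        < (ℓ ((1 - μ) • e v + μ • e u) + μ * ∑ i, r i * A.mulVec (e u) i) / μ := by
      gcongr
    linarith
  have hGwle : ∀ u : V, G (e w) ≤ G (e u) := by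
    intro u
    by_cases h : u = w
    · rw [h]
    · exact (hGw u h).le
  have hwmem : e w ∈ convexHull ℝ (Set.range e) := subset_convexHull ℝ _ ⟨w, rfl⟩
  constructor
  · intro z hz
    obtain ⟨s, c, hc0, hc1, rfl⟩ := hrep z hz
    rw [hkey _ hz, hkey (e w) hwmem, hGaff s c hc0 hc1]
    calc G (e w) = ∑ u ∈ s, c u * G (e w) := by
          rw [← Finset.sum_mul, hc1, one_mul]
      _ ≤ ∑ u ∈ s, c u * G (e u) :=
        Finset.sum_le_sum fun u hu => mul_le_mul_of_nonneg_left (hGwle u) (hc0 u hu)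
  · intro z hz hzw
    obtain ⟨s, c, hc0, hc1, rfl⟩ := hrep z hz
    rw [hkey _ hz, hkey (e w) hwmem, hGaff s c hc0 hc1] at hzw
    have hle : ∀ u ∈ s, c u * G (e w) ≤ c u * G (e u) := fun u hu =>
      mul_le_mul_of_nonneg_left (hGwle u) (hc0 u hu)
    have hterm : ∀ u ∈ s, u ≠ w → c u = 0 := by
      intro u0 hu0 hu0w
      by_contra hcne
      have hpos : 0 < c u0 := lt_of_le_of_ne (hc0 u0 hu0) (Ne.symm hcne)
      have hlt : ∑ u ∈ s, c u * G (e w) < ∑ u ∈ s, c u * G (e u) :=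
        Finset.sum_lt_sum hle ⟨u0, hu0, mul_lt_mul_of_pos_left (hGw u0 hu0w) hpos⟩
      have h8 : (∑ u ∈ s, c u) * G (e w) = ∑ u ∈ s, c u * G (e w) := Finset.sum_mul _ _ _
      rw [← h8, hc1, one_mul] at hlt
      linarith
    have hws : w ∈ s := by
      by_contra hws
      have h0 : ∑ u ∈ s, c u = 0 :=
        Finset.sum_eq_zero fun u hu => hterm u hu (fun h => hws (h ▸ hu))
      linarith
    have hcw : c w = 1 := by
      have h5 := Finset.sum_eq_single_of_mem w hws (fun u hu hne => hterm u hu hne)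
      rw [h5] at hc1
      exact hc1
    rw [Finset.sum_eq_single_of_mem w hws
      (fun u hu hne => by rw [hterm u hu hne, zero_smul]), hcw, one_smul]
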